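/- Let g ∈ GL(d, F_q) and suppose the characteristic polynomial of g factors as χ_g = P₁ · P₂^{c₂} ⋯ P_k^{c_k} with P₁, …, P_k irreducible, deg P₁ = m, and m ∤ deg P_i for all i ≥ 2. Let β = ⌈log_p(max{c₂,…,c_k})⌉ (with β = 0 if k = 1) and B = p^β · ∏_{i=2}^k (q^{deg P_i} - 1). Then the 1-eigenspace of g^B has dimension at least d - m. -/

import Mathlib

open Module Finset Polynomial Matrix

section Helpers

variable {K : Type*} [Field K]

lemma aux_aeval_restrict_coe {V : Type*} [AddCommGroup V] [Module K V]
    (f : V →ₗ[K] V) (W : Submodule K V) (hW : ∀ x ∈ W, f x ∈ W) (s : K[X]) (x : W) :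
    ((Polynomial.aeval (f.restrict hW) s) x : V) = (Polynomial.aeval f s) (x : V) := by
  induction s using Polynomial.induction_on' with
  | add p q hp hq => simp [hp, hq]
  | monomial n a =>
      rw [Polynomial.aeval_monomial, Polynomial.aeval_monomial]
      simp only [Module.End.mul_apply, Module.algebraMap_end_apply, Submodule.coe_smul,
        Module.End.pow_restrict n hW, LinearMap.restrict_coe_apply]

lemma aux_charpoly_restrict_dvd {V : Type*} [AddCommGroup V] [Module K V]
    [FiniteDimensional K V] (f : V →ₗ[K] V) (W : Submodule K V)
    (hW : ∀ x ∈ W, f x ∈ W) :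
    (f.restrict hW).charpoly ∣ f.charpoly := by
  obtain ⟨W', hc⟩ := Submodule.exists_isCompl W
  set e := Submodule.prodEquivOfIsCompl W W' hc with he
  have hch : (e.symm.conj f).charpoly = f.charpoly := e.symm.charpoly_conj f
  let bW := Module.finBasis K W
  let bW' := Module.finBasis K W'
  let b := bW.prod bW'
  set M := LinearMap.toMatrix b b (e.symm.conj f) with hM
  have hMc : (e.symm.conj f).charpoly = M.charpoly :=
    (LinearMap.charpoly_toMatrix _ b).symm
  have hblock : M = Matrix.fromBlocks (LinearMap.toMatrix bW bW (f.restrict hW))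
      M.toBlocks₁₂ 0 M.toBlocks₂₂ := by
    have key : ∀ j, (e.symm.conj f) (b (Sum.inl j)) =
        ((f.restrict hW) (bW j), (0 : W')) := by
      intro j
      have hb : b (Sum.inl j) = ((bW j : W), (0 : W')) :=
        Prod.ext (Basis.prod_apply_inl_fst ..) (Basis.prod_apply_inl_snd ..)
      rw [hb]
      have : e ((bW j : W), (0 : W')) = (bW j : V) := by
        simp [he, Submodule.coe_prodEquivOfIsCompl']
      rw [LinearEquiv.conj_apply]
      simp only [LinearMap.coe_comp, LinearEquiv.coe_coe, Function.comp_apply,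
        LinearEquiv.symm_symm, this]
      have hmem : f (bW j : V) ∈ W := hW _ (bW j).2
      have : f ((bW j : V)) = ((⟨f (bW j : V), hmem⟩ : W) : V) := rfl
      rw [this, Submodule.prodEquivOfIsCompl_symm_apply_left]
      rfl
    ext i j
    rcases i with i | i <;> rcases j with j | j
    · simp only [Matrix.fromBlocks_apply₁₁, hM, LinearMap.toMatrix_apply, key]
      simp [b, Basis.prod_repr_inl]
    · simp [Matrix.fromBlocks_apply₁₂, Matrix.toBlocks₁₂, hM]
    · simp only [Matrix.fromBlocks_apply₂₁, hM, LinearMap.toMatrix_apply, key,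
        Matrix.zero_apply]
      simp [b, Basis.prod_repr_inr]
    · simp [Matrix.fromBlocks_apply₂₂, Matrix.toBlocks₂₂, hM]
  rw [← hch, hMc, hblock, Matrix.charpoly_fromBlocks_zero₂₁,
    LinearMap.charpoly_toMatrix]
  exact Dvd.intro _ rfl

lemma aux_irred_dvd {n : Type*} [Fintype n] [DecidableEq n]
    {A : Matrix n n K} {r s : K[X]} (hr : r.Monic) (hirr : Irreducible r)
    (hdvd : r ∣ A.charpoly) (hs : Polynomial.aeval A s = 0) : r ∣ s := by
  haveI := Fact.mk hirr
  set E := AdjoinRoot r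
  set σ : K →+* E := algebraMap K E with hσ
  set lam := AdjoinRoot.root r with hlam
  have hrlam : Polynomial.aeval lam r = 0 := by
    rw [AdjoinRoot.aeval_eq, AdjoinRoot.mk_self]
  -- lam is a root of the mapped charpoly
  have hroot : Polynomial.eval lam ((A.map σ).charpoly) = 0 := by
    rw [Matrix.charpoly_map]
    obtain ⟨t, ht⟩ := hdvd
    rw [ht, Polynomial.map_mul, Polynomial.eval_mul]
    have : Polynomial.eval lam (r.map σ) = 0 := by
      rw [Polynomial.eval_map, ← Polynomial.aeval_def]
      exact hrlam
    rw [this, zero_mul]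
  -- hence det (scalar lam - A.map σ) = 0
  have hdet : (Matrix.scalar n lam - A.map σ).det = 0 := by
    have h1 := _root_.eval_det (Matrix.charmatrix (A.map σ)) lam
    rw [Matrix.matPolyEquiv_charmatrix] at h1
    rw [Matrix.charpoly] at hroot
    rw [hroot] at h1
    rw [Polynomial.eval_sub, Polynomial.eval_X, Polynomial.eval_C] at h1
    exact h1.symm
  obtain ⟨v, hv0, hv⟩ := (Matrix.exists_mulVec_eq_zero_iff).2 hdet
  have heig : (A.map σ) *ᵥ v = lam • v := by
    have h2 : Matrix.scalar n lam *ᵥ v - A.map σ *ᵥ v = 0 := by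
      rw [← Matrix.sub_mulVec]; exact hv
    have h3 : Matrix.scalar n lam *ᵥ v = lam • v := by
      ext i
      simp [Matrix.scalar, Matrix.mulVec_diagonal]
    rw [h3] at h2
    exact (sub_eq_zero.mp h2).symm
  have hpow : ∀ t : ℕ, (A.map σ) ^ t *ᵥ v = lam ^ t • v := by
    intro t; induction t with
    | zero => simp
    | succ t ih =>
        rw [pow_succ, pow_succ, ← Matrix.mulVec_mulVec, heig, Matrix.mulVec_smul, ih,
          smul_smul, mul_comm]
  have key : ∀ q : K[X], (Polynomial.aeval (A.map σ) q) *ᵥ v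
      = (Polynomial.aeval lam q) • v := by
    intro q
    induction q using Polynomial.induction_on' with
    | add u w hu hw => rw [map_add, map_add, Matrix.add_mulVec, hu, hw, add_smul]
    | monomial t a =>
        rw [Polynomial.aeval_monomial, Polynomial.aeval_monomial, ← Algebra.smul_def,
          ← Algebra.smul_def, Matrix.smul_mulVec, hpow, smul_assoc]
  have h0 : Polynomial.aeval (A.map σ) s = 0 := by
    have hΦ : A.map σ = (AlgHom.mapMatrix (Algebra.ofId K E)) A := rfl
    rw [hΦ, Polynomial.aeval_algHom_apply, hs, map_zero]
  have hlam0 : Polynomial.aeval lam s = 0 := by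
    have := key s
    rw [h0, Matrix.zero_mulVec] at this
    rcases smul_eq_zero.mp this.symm with h | h
    · exact h
    · exact absurd h hv0
  have hmp : minpoly K lam ∣ s := minpoly.dvd K lam hlam0
  rwa [AdjoinRoot.minpoly_root hirr.ne_zero, hr.leadingCoeff, inv_one,
    Polynomial.C_1, mul_one] at hmp

lemma aux_finrank_ker_aeval_le {V : Type*} [AddCommGroup V] [Module K V]
    [FiniteDimensional K V] (f : Module.End K V) {P0 Q : K[X]}
    (hmon : P0.Monic) (hirr : Irreducible P0) (hcop : IsCoprime P0 Q)
    (hch : f.charpoly = P0 * Q) :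
    finrank K (LinearMap.ker (Polynomial.aeval f P0)) ≤ P0.natDegree := by
  set W := LinearMap.ker (Polynomial.aeval f P0) with hWdef
  have hW : ∀ x ∈ W, f x ∈ W := by
    intro x hx
    rw [hWdef, LinearMap.mem_ker] at hx ⊢
    have hcomm : Polynomial.aeval f P0 * f = f * Polynomial.aeval f P0 := by
      have h1 : Polynomial.aeval f (P0 * X) = Polynomial.aeval f (X * P0) := by
        rw [mul_comm]
      simpa [_root_.map_mul] using h1
    calc (Polynomial.aeval f P0) (f x) = (Polynomial.aeval f P0 * f) x := rfl
      _ = (f * Polynomial.aeval f P0) x := by rw [hcomm]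
      _ = f ((Polynomial.aeval f P0) x) := rfl
      _ = 0 := by rw [hx, map_zero]
  by_contra hlt
  push_neg at hlt
  set f' := f.restrict hW with hf'
  have hres : Polynomial.aeval f' P0 = 0 := by
    apply LinearMap.ext
    intro x
    apply Subtype.ext
    have h1 := aux_aeval_restrict_coe f W hW P0 x
    have h2 : (Polynomial.aeval f P0) (x : V) = 0 := x.2
    rw [h2] at h1
    simpa using h1
  have hdvd : f'.charpoly ∣ f.charpoly := aux_charpoly_restrict_dvd f W hW
  have hdeg : f'.charpoly.natDegree = finrank K W := f'.charpoly_natDegree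
  have hkey : ∀ r : K[X], r.Monic → Irreducible r → r ∣ f'.charpoly → r = P0 := by
    intro r hm hi hd
    have hrP : r ∣ P0 := by
      set bW := Module.finBasis K W with hbW
      have hA : (LinearMap.toMatrix bW bW f').charpoly = f'.charpoly :=
        LinearMap.charpoly_toMatrix f' bW
      have hAs : Polynomial.aeval (LinearMap.toMatrix bW bW f') P0 = 0 := by
        have : LinearMap.toMatrix bW bW f'
            = (LinearMap.toMatrixAlgEquiv bW).toAlgHom f' := rfl
        rw [this, Polynomial.aeval_algHom_apply, hres, map_zero]
      exact aux_irred_dvd hm hi (hA ▸ hd) hAs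
    exact Polynomial.eq_of_monic_of_associated hm hmon (hi.associated_of_dvd hirr hrP)
  have hchne : f'.charpoly ≠ 0 := f'.charpoly_monic.ne_zero
  have hnu : ¬ IsUnit f'.charpoly := by
    apply Polynomial.not_isUnit_of_natDegree_pos
    omega
  obtain ⟨r, hrm, hri, hrd⟩ := f'.charpoly.exists_monic_irreducible_factor hnu
  obtain ⟨h', hh'⟩ := hkey r hrm hri hrd ▸ hrd
  have hh'ne : h' ≠ 0 := by
    intro h0; rw [h0, mul_zero] at hh'; exact hchne hh'
  have hnu' : ¬ IsUnit h' := by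
    apply Polynomial.not_isUnit_of_natDegree_pos
    have : f'.charpoly.natDegree = P0.natDegree + h'.natDegree := by
      rw [hh', Polynomial.natDegree_mul (hmon.ne_zero) hh'ne]
    omega
  obtain ⟨r', hr'm, hr'i, hr'd⟩ := h'.exists_monic_irreducible_factor hnu'
  have hr'P : r' = P0 := hkey r' hr'm hr'i (hr'd.trans ⟨P0, by rw [hh', mul_comm]⟩)
  have hP2 : P0 * P0 ∣ P0 * Q := by
    refine dvd_trans ?_ (hch ▸ hdvd)
    rw [hh']
    exact mul_dvd_mul_left P0 (hr'P ▸ hr'd)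
  have hPQ : P0 ∣ Q := (mul_dvd_mul_iff_left hmon.ne_zero).mp hP2
  exact hirr.not_isUnit (hcop.isUnit_of_dvd' dvd_rfl hPQ)

lemma aux_pow_dvd_X_pow_sub_one {F : Type*} [Field F] [Fintype F] {p : ℕ}
    [Fact p.Prime] [CharP F p] {P : F[X]} (hP : P.Monic) (hirr : Irreducible P)
    (hX : ¬ (X : F[X]) ∣ P) {c β N : ℕ} (hc : c ≤ p ^ β)
    (hN : Fintype.card F ^ P.natDegree - 1 ∣ N) :
    P ^ c ∣ (X : F[X]) ^ (p ^ β * N) - 1 := by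
  haveI := Fact.mk hirr
  set E := AdjoinRoot P with hE
  set b := (AdjoinRoot.powerBasis hirr.ne_zero).basis with hb
  haveI : Module.Finite F E := Module.Finite.of_basis b
  haveI : Fintype E := Module.fintypeOfFintype b
  have hcard : Fintype.card E = Fintype.card F ^ P.natDegree := by
    rw [Module.card_fintype b, Fintype.card_fin, AdjoinRoot.powerBasis_dim]
  have hroot0 : AdjoinRoot.root P ≠ 0 := by
    intro h0
    have hmk : AdjoinRoot.mk P X = 0 := by rw [AdjoinRoot.mk_X, h0]
    have hPX : P ∣ X := AdjoinRoot.mk_eq_zero.mp hmk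
    exact hX ((hirr.associated_of_dvd Polynomial.irreducible_X hPX).symm.dvd)
  set M := Fintype.card F ^ P.natDegree - 1 with hM
  have h1 : P ∣ (X : F[X]) ^ M - 1 := by
    rw [← AdjoinRoot.mk_eq_zero, map_sub, map_pow, AdjoinRoot.mk_X, _root_.map_one, sub_eq_zero,
      hM, ← hcard]
    exact FiniteField.pow_card_sub_one_eq_one _ hroot0
  have h2 : P ^ c ∣ ((X : F[X]) ^ M - 1) ^ (p ^ β) :=
    dvd_trans (pow_dvd_pow_of_dvd h1 c) (pow_dvd_pow _ hc)
  have h3 : ((X : F[X]) ^ M - 1) ^ (p ^ β) = (X : F[X]) ^ (M * p ^ β) - 1 := by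
    rw [sub_pow_char_pow, one_pow, ← pow_mul]
  obtain ⟨t, ht⟩ := hN
  have h4 : (X : F[X]) ^ (M * p ^ β) - 1 ∣ (X : F[X]) ^ (p ^ β * N) - 1 := by
    have := sub_dvd_pow_sub_pow ((X : F[X]) ^ (M * p ^ β)) 1 t
    rw [one_pow, ← pow_mul] at this
    have harith : M * p ^ β * t = p ^ β * N := by
      rw [ht]; ring
    rwa [harith] at this
  exact h2.trans (h3 ▸ h4)

end Helpers


/-- If the characteristic polynomial of `g ∈ GL(d, q)` factors as
`P₁ · P₂^{c₂} ⋯ P_k^{c_k}` with the `P_i` distinct monic irreducibles,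
`deg P₁ = m`, `m ∤ deg P_i` for `i ≥ 2`, then for
`β = ⌈log_p (max {c₂, …, c_k})⌉` and `B = p^β · ∏_{i≥2} (q^{deg P_i} - 1)`,
the `1`-eigenspace of `g^B` has dimension at least `d - m`. -/
theorem stmt16 {F : Type*} [Field F] [Fintype F] {p : ℕ} [Fact p.Prime] [CharP F p]
    {d m k : ℕ} (g : Matrix (Fin d) (Fin d) F) (hg : IsUnit g.det)
    (P : Fin (k + 1) → Polynomial F) (c : Fin (k + 1) → ℕ)
    (hirr : ∀ i, Irreducible (P i)) (hmon : ∀ i, (P i).Monic)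
    (hdist : Function.Injective P)
    (hc0 : c 0 = 1) (hdeg : (P 0).natDegree = m)
    (hnd : ∀ i : Fin (k + 1), i ≠ 0 → ¬ m ∣ (P i).natDegree)
    (hfac : g.charpoly = ∏ i, P i ^ c i) :
    d - m ≤ finrank F
      (LinearMap.ker (Matrix.toLin'
        (g ^ (p ^ Nat.clog p ((Finset.univ.erase (0 : Fin (k + 1))).sup c) *
              ∏ i ∈ Finset.univ.erase (0 : Fin (k + 1)),
                (Fintype.card F ^ (P i).natDegree - 1)) - 1))) := by
  classical
  set β := Nat.clog p ((Finset.univ.erase (0 : Fin (k + 1))).sup c) with hβ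
  set N := ∏ i ∈ Finset.univ.erase (0 : Fin (k + 1)),
    (Fintype.card F ^ (P i).natDegree - 1) with hN
  set B := p ^ β * N with hB
  set Q := ∏ i ∈ Finset.univ.erase (0 : Fin (k + 1)), P i ^ c i with hQ
  have hPQ : g.charpoly = P 0 * Q := by
    rw [hfac, ← Finset.mul_prod_erase univ _ (mem_univ 0), hc0, pow_one]
  have hne : ∀ i j : Fin (k + 1), i ≠ j → ¬ P i ∣ P j := by
    intro i j hij hd
    exact hij (hdist (Polynomial.eq_of_monic_of_associated (hmon i) (hmon j)
      ((hirr i).associated_of_dvd (hirr j) hd)))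
  have hcopP : ∀ i j : Fin (k + 1), i ≠ j → IsCoprime (P i) (P j) :=
    fun i j hij => (hirr i).coprime_iff_not_dvd.mpr (hne i j hij)
  have hcop : IsCoprime (P 0) Q :=
    IsCoprime.prod_right fun i hi =>
      (hcopP 0 i (Ne.symm (Finset.ne_of_mem_erase hi))).pow_right
  -- Q divides X^B - 1
  have hQdvd : Q ∣ (X : F[X]) ^ B - 1 := by
    rw [hQ]
    apply Finset.prod_dvd_of_coprime
    · intro i hi j hj hij
      exact ((hcopP i j hij).pow_right).pow_left
    · intro i hi
      rcases Nat.eq_zero_or_pos (c i) with h0 | h0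
      · rw [h0, pow_zero]; exact one_dvd _
      · apply aux_pow_dvd_X_pow_sub_one (hmon i) (hirr i)
        · -- ¬ X ∣ P i
          intro hXd
          have hPiX : P i = X := Polynomial.eq_of_monic_of_associated (hmon i)
            Polynomial.monic_X (Polynomial.irreducible_X.associated_of_dvd (hirr i) hXd).symm
          have hXch : (X : F[X]) ∣ g.charpoly := by
            rw [hfac]
            refine dvd_trans ?_ (Finset.dvd_prod_of_mem _ (mem_univ i))
            rw [← hPiX]
            exact dvd_pow_self (P i) h0.ne'
          have hc0' : g.charpoly.coeff 0 = 0 := Polynomial.X_dvd_iff.mp hXch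
          have hdet := g.det_eq_sign_charpoly_coeff
          rw [hc0'] at hdet
          rw [hdet] at hg
          simp at hg
        · calc c i ≤ (univ.erase (0 : Fin (k + 1))).sup c := Finset.le_sup hi
            _ ≤ p ^ β := Nat.le_pow_clog (Fact.out : p.Prime).one_lt _
        · exact Finset.dvd_prod_of_mem _ hi
  obtain ⟨R, hR⟩ := hQdvd
  -- Cayley-Hamilton
  have hCH : Polynomial.aeval g (P 0) * Polynomial.aeval g Q = 0 := by
    rw [← _root_.map_mul, ← hPQ, Matrix.aeval_self_charpoly]
  have hgB : g ^ B - 1 = Polynomial.aeval g R * Polynomial.aeval g Q := by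
    have h1 : (X : F[X]) ^ B - 1 = R * Q := by rw [hR, mul_comm]
    calc g ^ B - 1 = Polynomial.aeval g ((X : F[X]) ^ B - 1) := by
          simp [map_sub, map_pow]
      _ = Polynomial.aeval g R * Polynomial.aeval g Q := by rw [h1, _root_.map_mul]
  have hker : LinearMap.ker (Matrix.toLin' (Polynomial.aeval g Q))
      ≤ LinearMap.ker (Matrix.toLin' (g ^ B - 1)) := by
    intro v hv
    rw [LinearMap.mem_ker, Matrix.toLin'_apply] at hv ⊢
    rw [hgB, ← Matrix.mulVec_mulVec, hv, Matrix.mulVec_zero]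
  refine le_trans ?_ (Submodule.finrank_mono hker)
  have hrange : LinearMap.range (Matrix.toLin' (Polynomial.aeval g Q))
      ≤ LinearMap.ker (Matrix.toLin' (Polynomial.aeval g (P 0))) := by
    rintro _ ⟨v, rfl⟩
    rw [LinearMap.mem_ker, Matrix.toLin'_apply, Matrix.toLin'_apply,
      Matrix.mulVec_mulVec, hCH, Matrix.zero_mulVec]
  -- identify the kernel with ker of aeval on the End side
  have hEq : Matrix.toLin' (Polynomial.aeval g (P 0))
      = Polynomial.aeval (Matrix.toLin' g) (P 0) := by
    have h1 : Matrix.toLin' g = Matrix.toLinAlgEquiv'.toAlgHom g := rfl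
    rw [h1, Polynomial.aeval_algHom_apply]
    rfl
  have hchf : (Matrix.toLin' g : Module.End F (Fin d → F)).charpoly = g.charpoly := by
    rw [← LinearMap.charpoly_toMatrix (Matrix.toLin' g) (Pi.basisFun F (Fin d)),
      LinearMap.toMatrix_eq_toMatrix', LinearMap.toMatrix'_toLin']
  have hcrux : finrank F (LinearMap.ker (Matrix.toLin' (Polynomial.aeval g (P 0)))) ≤ m := by
    rw [hEq, ← hdeg]
    exact aux_finrank_ker_aeval_le (Matrix.toLin' g) (hmon 0) (hirr 0) hcop
      (hchf.trans hPQ)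
  have hrk := LinearMap.finrank_range_add_finrank_ker (Matrix.toLin' (Polynomial.aeval g Q))
  have hrle : finrank F (LinearMap.range (Matrix.toLin' (Polynomial.aeval g Q))) ≤ m :=
    le_trans (Submodule.finrank_mono hrange) hcrux
  have hdim : finrank F (Fin d → F) = d := by simp
  omega
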